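/- Let V be a nonempty countable set and b : P(V) → [0,∞] satisfy: (0) b(X) = 0 iff X ∈ {∅, V}; (1) b(X) = b(V \ X); (2) b(X) + b(Y) ≥ b(X ∩ Y) + b(X ∪ Y); (3') for every ⊆-monotone sequence (X_n) of subsets, b(lim X_n) ≤ liminf_n b(X_n); (4) λ_b(u,v) < ∞ for all u ≠ v. Then there exists a laminar system L* of optimal cuts such that every pair of distinct vertices u, v ∈ V is separated optimally by some member of L*. -/

import Mathlib

open Set Filter Topology ENNReal

noncomputable section

/-- `λ_b(u,v)`: the infimum of `b(X)` over all `u-v` cuts `X`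
(sets with `u ∈ X` and `v ∉ X`). -/
def lamB {V : Type*} (b : Set V → ℝ≥0∞) (u v : V) : ℝ≥0∞ :=
  ⨅ (X : Set V) (_ : u ∈ X ∧ v ∉ X), b X

/-- `X` is an optimal `u-v` cut: a `u-v` cut with `b(X) = λ_b(u,v)`. -/
def IsOptCut {V : Type*} (b : Set V → ℝ≥0∞) (u v : V) (X : Set V) : Prop :=
  u ∈ X ∧ v ∉ X ∧ b X = lamB b u v

/-- `X` separates `u` and `v` optimally: `X` or its complement is an optimal `u-v` cut. -/
def SepOptimally {V : Type*} (b : Set V → ℝ≥0∞) (u v : V) (X : Set V) : Prop :=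
  IsOptCut b u v X ∨ IsOptCut b u v Xᶜ

/-- A family of sets is laminar if any two members are disjoint or `⊆`-comparable. -/
def Laminar {V : Type*} (F : Set (Set V)) : Prop :=
  ∀ A ∈ F, ∀ B ∈ F, A ∩ B = ∅ ∨ A ⊆ B ∨ B ⊆ A

section AuxLaminar

def LamPair {V : Type*} (A B : Set V) : Prop :=
  A ∩ B = ∅ ∨ A ⊆ B ∨ B ⊆ A

variable {V : Type*} (b : Set V → ℝ≥0∞)

lemma lamB_le_cut {u v : V} {X : Set V} (hu : u ∈ X) (hv : v ∉ X) :
    lamB b u v ≤ b X := iInf₂_le X ⟨hu, hv⟩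

lemma lamB_comm (h1 : ∀ X : Set V, b Xᶜ = b X) (u v : V) :
    lamB b u v = lamB b v u := by
  have key : ∀ a c : V, lamB b a c ≤ lamB b c a := by
    intro a c
    refine le_iInf₂ fun X hX => ?_
    calc lamB b a c ≤ b Xᶜ := lamB_le_cut b (by simpa using hX.2) (by simpa using hX.1)
    _ = b X := h1 X
  exact le_antisymm (key u v) (key v u)

lemma isOptCut_of_le {u v : V} {X : Set V} (hu : u ∈ X) (hv : v ∉ X)
    (h : b X ≤ lamB b u v) : IsOptCut b u v X :=
  ⟨hu, hv, le_antisymm h (lamB_le_cut b hu hv)⟩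

section lampair
variable {Z X Y : Set V}

lemma lamPair_symm (h : LamPair X Y) : LamPair Y X := by
  rcases h with h | h | h
  · exact Or.inl (by rw [Set.inter_comm]; exact h)
  · exact Or.inr (Or.inr h)
  · exact Or.inr (Or.inl h)

lemma lamPair_inter (hZX : LamPair Z X) (hZY : LamPair Z Y) : LamPair Z (Y ∩ X) := by
  rcases hZY with h | h | h
  · refine Or.inl (Set.eq_empty_iff_forall_notMem.mpr fun x hx => ?_)
    exact Set.eq_empty_iff_forall_notMem.mp h x ⟨hx.1, hx.2.1⟩
  · rcases hZX with g | g | g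
    · refine Or.inl (Set.eq_empty_iff_forall_notMem.mpr fun x hx => ?_)
      exact Set.eq_empty_iff_forall_notMem.mp g x ⟨hx.1, hx.2.2⟩
    · exact Or.inr (Or.inl (Set.subset_inter h g))
    · exact Or.inr (Or.inr (Set.inter_subset_right.trans g))
  · exact Or.inr (Or.inr (Set.inter_subset_left.trans h))

lemma lamPair_union (hcross : X ∩ Y ≠ ∅) (hZX : LamPair Z X) (hZY : LamPair Z Y) :
    LamPair Z (Y ∪ X) := by
  rcases hZX with g | g | g
  · rcases hZY with h | h | h
    · exact Or.inl (by rw [Set.inter_union_distrib_left, h, g, Set.union_empty])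
    · exact Or.inr (Or.inl (h.trans Set.subset_union_left))
    · refine absurd (Set.eq_empty_iff_forall_notMem.mpr fun x hx => ?_) hcross
      exact Set.eq_empty_iff_forall_notMem.mp g x ⟨h hx.2, hx.1⟩
  · exact Or.inr (Or.inl (g.trans Set.subset_union_right))
  · rcases hZY with h | h | h
    · refine absurd (Set.eq_empty_iff_forall_notMem.mpr fun x hx => ?_) hcross
      exact Set.eq_empty_iff_forall_notMem.mp h x ⟨g hx.1, hx.2⟩
    · exact Or.inr (Or.inl (h.trans Set.subset_union_left))
    · exact Or.inr (Or.inr (Set.union_subset h g))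

lemma lamPair_diff (hcross : X ∩ Y ≠ ∅) (hnXY : ¬ X ⊆ Y) (hnYX : ¬ Y ⊆ X)
    (hZX : LamPair Z X) (hZY : LamPair Z Y) : LamPair Z (X ∩ Yᶜ) := by
  rcases hZX with g | g | g
  · refine Or.inl (Set.eq_empty_iff_forall_notMem.mpr fun x hx => ?_)
    exact Set.eq_empty_iff_forall_notMem.mp g x ⟨hx.1, hx.2.1⟩
  · rcases hZY with h | h | h
    · refine Or.inr (Or.inl (Set.subset_inter g fun x hx hxY => ?_))
      exact Set.eq_empty_iff_forall_notMem.mp h x ⟨hx, hxY⟩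
    · exact Or.inl (Set.eq_empty_iff_forall_notMem.mpr fun x hx => hx.2.2 (h hx.1))
    · exact absurd (h.trans g) hnYX
  · rcases hZY with h | h | h
    · refine absurd (Set.eq_empty_iff_forall_notMem.mpr fun x hx => ?_) hcross
      exact Set.eq_empty_iff_forall_notMem.mp h x ⟨g hx.1, hx.2⟩
    · exact absurd (g.trans h) hnXY
    · exact Or.inr (Or.inr (Set.inter_subset_left.trans g))

end lampair

/-- key submodularity helper: if C is an a-c cut, D has b D ≥ ν with ν ≠ ⊤,
and b C + b D ≤ b Y + ν where Y is an optimal a-c cut, then C is optimal. -/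
lemma key_opt {a c : V} {Y C D : Set V} {ν : ℝ≥0∞}
    (hY : IsOptCut b a c Y) (haC : a ∈ C) (hcC : c ∉ C)
    (hνD : ν ≤ b D) (hν : ν ≠ ⊤)
    (hsub : b C + b D ≤ b Y + ν) : IsOptCut b a c C := by
  refine isOptCut_of_le b haC hcC ?_
  have : b C + ν ≤ lamB b a c + ν := by
    calc b C + ν ≤ b C + b D := add_le_add_right hνD _
      _ ≤ b Y + ν := hsub
      _ = lamB b a c + ν := by rw [hY.2.2]
  exact (ENNReal.add_le_add_iff_right hν).mp this

lemma isOptCut_compl' (h1 : ∀ X : Set V, b Xᶜ = b X) {u v : V} {X : Set V}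
    (h : IsOptCut b u v X) : IsOptCut b v u Xᶜ :=
  ⟨h.2.1, by simpa using h.1, by rw [h1, h.2.2, lamB_comm b h1]⟩

/-- Uncrossing: given an optimal a-c cut `Y` and an optimal s-t cut `X`, one of the
five sets `Y∩X, Y∪X, Y∩Xᶜ, X∩Yᶜ, X` is an optimal a-c or c-a cut. -/
lemma uncross (h1 : ∀ X : Set V, b Xᶜ = b X)
    (h2 : ∀ X Y : Set V, b (X ∩ Y) + b (X ∪ Y) ≤ b X + b Y)
    {a c s t : V} {X Y : Set V}
    (hY : IsOptCut b a c Y) (hX : IsOptCut b s t X) (hfin : lamB b s t ≠ ⊤) :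
    ∃ Z, (IsOptCut b a c Z ∨ IsOptCut b c a Z) ∧
      (Z = Y ∩ X ∨ Z = Y ∪ X ∨ Z = Y ∩ Xᶜ ∨ Z = X ∩ Yᶜ ∨ Z = X) := by
  obtain ⟨haY, hcY, hbY⟩ := hY
  obtain ⟨hsX, htX, hbX⟩ := hX
  have hνY : b X = lamB b s t := hbX
  -- case 1
  by_cases haX : a ∈ X
  · by_cases htY : t ∈ Y
    · by_cases hcX : c ∈ X
      · -- case 2 : Z = X ∩ Yᶜ
        refine ⟨X ∩ Yᶜ, Or.inr ?_, Or.inr (Or.inr (Or.inr (Or.inl rfl)))⟩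
        have hopt : IsOptCut b a c (Y ∪ Xᶜ) := by
          refine key_opt b ⟨haY, hcY, hbY⟩ (Or.inl haY)
            (fun h => h.elim hcY (fun h' => h' hcX)) (D := Y ∩ Xᶜ)
            (ν := lamB b s t) ?_ hfin ?_
          · rw [lamB_comm b h1 s t]
            exact lamB_le_cut b ⟨htY, htX⟩ (fun h => h.2 hsX)
          · calc b (Y ∪ Xᶜ) + b (Y ∩ Xᶜ) = b (Y ∩ Xᶜ) + b (Y ∪ Xᶜ) := add_comm _ _
              _ ≤ b Y + b Xᶜ := h2 Y Xᶜ
              _ = b Y + lamB b s t := by rw [h1, hνY]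
        have := isOptCut_compl' b h1 hopt
        have hset : (Y ∪ Xᶜ)ᶜ = X ∩ Yᶜ := by
          rw [Set.compl_union, compl_compl, Set.inter_comm]
        rwa [hset] at this
      · by_cases hsY : s ∈ Y
        · -- case 3 : Z = Y ∪ X
          refine ⟨Y ∪ X, Or.inl ?_, Or.inr (Or.inl rfl)⟩
          refine key_opt b ⟨haY, hcY, hbY⟩ (Or.inl haY)
            (fun h => h.elim hcY hcX) (D := Y ∩ X) (ν := lamB b s t) ?_ hfin ?_
          · exact lamB_le_cut b ⟨hsY, hsX⟩ (fun h => htX h.2)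
          · calc b (Y ∪ X) + b (Y ∩ X) = b (Y ∩ X) + b (Y ∪ X) := add_comm _ _
              _ ≤ b Y + b X := h2 Y X
              _ = b Y + lamB b s t := by rw [hνY]
        · -- case 5 : Z = X, opt (a,c)
          refine ⟨X, Or.inl (isOptCut_of_le b haX hcX ?_), Or.inr (Or.inr (Or.inr (Or.inr rfl)))⟩
          calc b X = lamB b s t := hνY
            _ ≤ b Yᶜ := lamB_le_cut b (by simpa using hsY) (by simpa using htY)
            _ = b Y := h1 Y
            _ = lamB b a c := hbY
    · -- case 1 : Z = Y ∩ X
      refine ⟨Y ∩ X, Or.inl ?_, Or.inl rfl⟩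
      refine key_opt b ⟨haY, hcY, hbY⟩ ⟨haY, haX⟩
        (fun h => hcY h.1) (D := Y ∪ X) (ν := lamB b s t) ?_ hfin ?_
      · exact lamB_le_cut b (Or.inr hsX) (fun h => h.elim htY htX)
      · calc b (Y ∩ X) + b (Y ∪ X) ≤ b Y + b X := h2 Y X
          _ = b Y + lamB b s t := by rw [hνY]
  · by_cases hsY : s ∈ Y
    · by_cases hcX : c ∈ X
      · by_cases htY : t ∈ Y
        · -- case 2 again : Z = X ∩ Yᶜ
          refine ⟨X ∩ Yᶜ, Or.inr ?_, Or.inr (Or.inr (Or.inr (Or.inl rfl)))⟩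
          have hopt : IsOptCut b a c (Y ∪ Xᶜ) := by
            refine key_opt b ⟨haY, hcY, hbY⟩ (Or.inl haY)
              (fun h => h.elim hcY (fun h' => h' hcX)) (D := Y ∩ Xᶜ)
              (ν := lamB b s t) ?_ hfin ?_
            · rw [lamB_comm b h1 s t]
              exact lamB_le_cut b ⟨htY, htX⟩ (fun h => h.2 hsX)
            · calc b (Y ∪ Xᶜ) + b (Y ∩ Xᶜ) = b (Y ∩ Xᶜ) + b (Y ∪ Xᶜ) := add_comm _ _
                _ ≤ b Y + b Xᶜ := h2 Y Xᶜ
                _ = b Y + lamB b s t := by rw [h1, hνY]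
          have := isOptCut_compl' b h1 hopt
          have hset : (Y ∪ Xᶜ)ᶜ = X ∩ Yᶜ := by
            rw [Set.compl_union, compl_compl, Set.inter_comm]
          rwa [hset] at this
        · -- case 6 : Z = X, opt (c,a)
          refine ⟨X, Or.inr (isOptCut_of_le b hcX haX ?_), Or.inr (Or.inr (Or.inr (Or.inr rfl)))⟩
          calc b X = lamB b s t := hνY
            _ ≤ b Y := lamB_le_cut b hsY htY
            _ = lamB b a c := hbY
            _ = lamB b c a := lamB_comm b h1 a c
      · -- case 3 : Z = Y ∪ X
        refine ⟨Y ∪ X, Or.inl ?_, Or.inr (Or.inl rfl)⟩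
        refine key_opt b ⟨haY, hcY, hbY⟩ (Or.inl haY)
          (fun h => h.elim hcY hcX) (D := Y ∩ X) (ν := lamB b s t) ?_ hfin ?_
        · exact lamB_le_cut b ⟨hsY, hsX⟩ (fun h => htX h.2)
        · calc b (Y ∪ X) + b (Y ∩ X) = b (Y ∩ X) + b (Y ∪ X) := add_comm _ _
            _ ≤ b Y + b X := h2 Y X
            _ = b Y + lamB b s t := by rw [hνY]
    · -- case 4 : Z = Y ∩ Xᶜ
      refine ⟨Y ∩ Xᶜ, Or.inl ?_, Or.inr (Or.inr (Or.inl rfl))⟩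
      refine key_opt b ⟨haY, hcY, hbY⟩ ⟨haY, haX⟩
        (fun h => hcY h.1) (D := Y ∪ Xᶜ) (ν := lamB b s t) ?_ hfin ?_
      · rw [lamB_comm b h1 s t]
        exact lamB_le_cut b (Or.inr htX) (fun h => h.elim hsY (fun h' => h' hsX))
      · calc b (Y ∩ Xᶜ) + b (Y ∪ Xᶜ) ≤ b Y + b Xᶜ := h2 Y Xᶜ
          _ = b Y + lamB b s t := by rw [h1, hνY]

lemma extend_lemma (h1 : ∀ X : Set V, b Xᶜ = b X)
    (h2 : ∀ X Y : Set V, b (X ∩ Y) + b (X ∪ Y) ≤ b X + b Y)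
    (h4 : ∀ u v : V, u ≠ v → lamB b u v < ⊤)
    (hexists : ∀ u v : V, u ≠ v → ∃ X, IsOptCut b u v X)
    (p : V) (F : Set (Set V)) (hFfin : F.Finite)
    (hFlam : ∀ A ∈ F, ∀ B ∈ F, LamPair A B)
    (hFp : ∀ W ∈ F, p ∉ W)
    (hFopt : ∀ W ∈ F, ∃ x y : V, x ≠ y ∧ IsOptCut b x y W)
    {u v : V} (huv : u ≠ v) :
    ∃ Z, p ∉ Z ∧ (IsOptCut b u v Z ∨ IsOptCut b v u Z) ∧ ∀ W ∈ F, LamPair Z W := by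
  classical
  set Cand : Set V → Prop := fun Y => p ∉ Y ∧ (IsOptCut b u v Y ∨ IsOptCut b v u Y) with hCand
  have hne : ∃ Y, Cand Y := by
    obtain ⟨Y0, hY0⟩ := hexists u v huv
    by_cases hp : p ∈ Y0
    · exact ⟨Y0ᶜ, by simpa using hp, Or.inr (isOptCut_compl' b h1 hY0)⟩
    · exact ⟨Y0, hp, Or.inl hY0⟩
  set count : Set V → ℕ := fun Y => (hFfin.toFinset.filter (fun W => ¬ LamPair Y W)).card
    with hcountdef
  set S : Set ℕ := {n | ∃ Y, Cand Y ∧ count Y = n} with hS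
  have hSne : S.Nonempty := by
    obtain ⟨Y, hY⟩ := hne
    exact ⟨count Y, Y, hY, rfl⟩
  obtain ⟨Y, hYc, hYcount⟩ := Nat.sInf_mem hSne
  -- claim : Y is laminar with all of F
  have hclaim : ∀ W ∈ F, LamPair Y W := by
    by_contra hcon
    push_neg at hcon
    obtain ⟨X, hXF, hnYX⟩ := hcon
    have hXcrossing : Y ∩ X ≠ ∅ ∧ ¬ Y ⊆ X ∧ ¬ X ⊆ Y := by
      rw [LamPair] at hnYX; push_neg at hnYX
      exact ⟨hnYX.1.ne_empty, hnYX.2⟩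
    obtain ⟨hcr, hnsub1, hnsub2⟩ := hXcrossing
    have hcr' : X ∩ Y ≠ ∅ := by rw [Set.inter_comm]; exact hcr
    obtain ⟨s, t, hst, hXopt⟩ := hFopt X hXF
    have hstfin : lamB b s t ≠ ⊤ := (h4 s t hst).ne
    -- apply uncrossing for either orientation of Y
    have huncross : ∃ Z, (IsOptCut b u v Z ∨ IsOptCut b v u Z) ∧
        (Z = Y ∩ X ∨ Z = Y ∪ X ∨ Z = Y ∩ Xᶜ ∨ Z = X ∩ Yᶜ ∨ Z = X) := by
      rcases hYc.2 with hYopt | hYopt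
      · obtain ⟨Z, hZopt, hZform⟩ := uncross b h1 h2 hYopt hXopt hstfin
        exact ⟨Z, hZopt, hZform⟩
      · obtain ⟨Z, hZopt, hZform⟩ := uncross b h1 h2 hYopt hXopt hstfin
        exact ⟨Z, hZopt.symm.imp id id, hZform⟩
    obtain ⟨Z, hZopt, hZform⟩ := huncross
    -- p ∉ Z
    have hpX : p ∉ X := hFp X hXF
    have hpZ : p ∉ Z := by
      rcases hZform with rfl | rfl | rfl | rfl | rfl
      · exact fun h => hYc.1 h.1
      · exact fun h => h.elim hYc.1 hpX
      · exact fun h => hYc.1 h.1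
      · exact fun h => hpX h.1
      · exact hpX
    -- Z is laminar with X
    have hZX : LamPair Z X := by
      rcases hZform with rfl | rfl | rfl | rfl | rfl
      · exact Or.inr (Or.inl Set.inter_subset_right)
      · exact Or.inr (Or.inr Set.subset_union_right)
      · exact Or.inl (by ext x; simp only [Set.mem_inter_iff, Set.mem_compl_iff,
          Set.mem_empty_iff_false, iff_false]; tauto)
      · exact Or.inr (Or.inl Set.inter_subset_left)
      · exact Or.inr (Or.inl subset_rfl)
    -- Z is laminar with everything Y is laminar with
    have hZpres : ∀ W ∈ F, LamPair Y W → LamPair Z W := by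
      intro W hWF hYW
      have hWX : LamPair W X := hFlam W hWF X hXF
      have hWY : LamPair W Y := lamPair_symm hYW
      rcases hZform with rfl | rfl | rfl | rfl | rfl
      · exact lamPair_symm (lamPair_inter hWX hWY)
      · exact lamPair_symm (lamPair_union hcr' hWX hWY)
      · exact lamPair_symm (lamPair_diff hcr hnsub1 hnsub2 hWY hWX)
      · exact lamPair_symm (lamPair_diff hcr' hnsub2 hnsub1 hWX hWY)
      · exact lamPair_symm hWX
    -- fewer crossings
    have hsubset : hFfin.toFinset.filter (fun W => ¬ LamPair Z W) ⊂
        hFfin.toFinset.filter (fun W => ¬ LamPair Y W) := by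
      constructor
      · intro W hW
        simp only [Finset.mem_filter, Set.Finite.mem_toFinset] at hW ⊢
        refine ⟨hW.1, fun hYW => hW.2 (hZpres W hW.1 hYW)⟩
      · intro hsup
        have hXmem : X ∈ hFfin.toFinset.filter (fun W => ¬ LamPair Y W) := by
          simp only [Finset.mem_filter, Set.Finite.mem_toFinset]
          exact ⟨hXF, hnYX⟩
        have := hsup hXmem
        simp only [Finset.mem_filter, Set.Finite.mem_toFinset] at this
        exact this.2 hZX
    have hlt : count Z < count Y := Finset.card_lt_card hsubset
    have hZS : count Z ∈ S := ⟨Z, ⟨hpZ, hZopt⟩, rfl⟩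
    have := Nat.sInf_le hZS
    omega
  exact ⟨Y, hYc.1, hYc.2, hclaim⟩

lemma exists_isOptCut
    (h2 : ∀ X Y : Set V, b (X ∩ Y) + b (X ∪ Y) ≤ b X + b Y)
    (h3m : ∀ X : ℕ → Set V, Monotone X →
      b (⋃ n, X n) ≤ Filter.liminf (fun n => b (X n)) Filter.atTop)
    (h3a : ∀ X : ℕ → Set V, Antitone X →
      b (⋂ n, X n) ≤ Filter.liminf (fun n => b (X n)) Filter.atTop)
    {u v : V} (hfin : lamB b u v ≠ ⊤) :
    ∃ X, IsOptCut b u v X := by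
  set lam := lamB b u v with hlam
  -- approximate minimizers
  have step1 : ∀ n : ℕ, ∃ X : Set V, (u ∈ X ∧ v ∉ X) ∧ b X ≤ lam + 2⁻¹ ^ n := by
    intro n
    have hlt : lam < lam + 2⁻¹ ^ n :=
      ENNReal.lt_add_right hfin (pow_ne_zero _ (by simp))
    rw [hlam, lamB] at hlt
    rw [iInf_lt_iff] at hlt
    obtain ⟨X, hX⟩ := hlt
    rw [iInf_lt_iff] at hX
    obtain ⟨hcut, hbX⟩ := hX
    exact ⟨X, hcut, hbX.le⟩
  choose Xs hcut hb using step1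
  -- finite intersections
  have key : ∀ n N : ℕ,
      b (⋂ m ∈ Finset.range (N + 1), Xs (n + m)) ≤
        lam + ∑ m ∈ Finset.range (N + 1), (2⁻¹ : ℝ≥0∞) ^ (n + m) := by
    intro n N
    induction N with
    | zero => simpa using hb (n + 0)
    | succ N ih =>
        have hrw : (⋂ m ∈ Finset.range (N + 1 + 1), Xs (n + m)) =
            Xs (n + (N + 1)) ∩ ⋂ m ∈ Finset.range (N + 1), Xs (n + m) := by
          rw [Finset.range_add_one, Finset.set_biInter_insert]
        set K := ⋂ m ∈ Finset.range (N + 1), Xs (n + m) with hK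
        have huK : u ∈ K := Set.mem_biInter fun m _ => (hcut (n + m)).1
        have hvK : v ∉ K := fun h => (hcut (n + 0)).2
          (Set.mem_iInter₂.mp h 0 (Finset.mem_range.mpr (Nat.succ_pos _)))
        have hsub := h2 (Xs (n + (N + 1))) K
        have hunion : lam ≤ b (Xs (n + (N + 1)) ∪ K) :=
          lamB_le_cut b (Set.mem_union_left _ (hcut _).1)
            (fun h => h.elim (hcut _).2 hvK)
        have hchain : b (Xs (n + (N + 1)) ∩ K) + lam ≤
            (lam + ∑ m ∈ Finset.range (N + 1), (2⁻¹ : ℝ≥0∞) ^ (n + m))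
              + (lam + 2⁻¹ ^ (n + (N + 1))) := by
          calc b (Xs (n + (N + 1)) ∩ K) + lam
              ≤ b (Xs (n + (N + 1)) ∩ K) + b (Xs (n + (N + 1)) ∪ K) :=
                add_le_add_right hunion _
            _ ≤ b (Xs (n + (N + 1))) + b K := hsub
            _ ≤ (lam + 2⁻¹ ^ (n + (N + 1))) +
                (lam + ∑ m ∈ Finset.range (N + 1), (2⁻¹ : ℝ≥0∞) ^ (n + m)) :=
                add_le_add (hb _) ih
            _ = _ := by ring
        rw [hrw]
        have := (ENNReal.add_le_add_iff_right hfin).mp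
          (by calc b (Xs (n + (N + 1)) ∩ K) + lam ≤ _ := hchain
              _ = (lam + (∑ m ∈ Finset.range (N + 1), (2⁻¹ : ℝ≥0∞) ^ (n + m)
                    + 2⁻¹ ^ (n + (N + 1)))) + lam := by ring)
        calc b (Xs (n + (N + 1)) ∩ K)
            ≤ lam + (∑ m ∈ Finset.range (N + 1), (2⁻¹ : ℝ≥0∞) ^ (n + m)
                + 2⁻¹ ^ (n + (N + 1))) := this
          _ = lam + ∑ m ∈ Finset.range (N + 1 + 1), (2⁻¹ : ℝ≥0∞) ^ (n + m) := by
              conv_rhs => rw [Finset.sum_range_succ]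
  -- geometric bound
  have sumbd : ∀ n N : ℕ,
      ∑ m ∈ Finset.range (N + 1), (2⁻¹ : ℝ≥0∞) ^ (n + m) ≤ 2⁻¹ ^ n * 2 := by
    intro n N
    have : ∑ m ∈ Finset.range (N + 1), (2⁻¹ : ℝ≥0∞) ^ (n + m)
        = 2⁻¹ ^ n * ∑ m ∈ Finset.range (N + 1), (2⁻¹ : ℝ≥0∞) ^ m := by
      rw [Finset.mul_sum]
      exact Finset.sum_congr rfl fun m _ => pow_add _ _ _
    rw [this]
    refine mul_le_mul_right ?_ _
    calc ∑ m ∈ Finset.range (N + 1), (2⁻¹ : ℝ≥0∞) ^ m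
        ≤ ∑' m, (2⁻¹ : ℝ≥0∞) ^ m := ENNReal.sum_le_tsum _
      _ = (1 - 2⁻¹)⁻¹ := ENNReal.tsum_geometric _
      _ = 2 := by norm_num [ENNReal.one_sub_inv_two]
  -- tails
  set W : ℕ → Set V := fun n => ⋂ k, Xs (n + k) with hW
  have hWbound : ∀ n, b (W n) ≤ lam + 2⁻¹ ^ n * 2 := by
    intro n
    have heq : W n = ⋂ N, ⋂ m ∈ Finset.range (N + 1), Xs (n + m) := by
      ext x
      simp only [hW, Set.mem_iInter, Set.mem_iInter₂, Finset.mem_range]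
      constructor
      · intro h N m _; exact h m
      · intro h k; exact h k k (Nat.lt_succ_self k)
    have hanti : Antitone (fun N => ⋂ m ∈ Finset.range (N + 1), Xs (n + m)) := by
      intro N M hNM
      exact Set.biInter_subset_biInter_left
        (Finset.range_subset_range.mpr (Nat.succ_le_succ hNM))
    calc b (W n) = b (⋂ N, ⋂ m ∈ Finset.range (N + 1), Xs (n + m)) := by rw [heq]
      _ ≤ Filter.liminf (fun N => b (⋂ m ∈ Finset.range (N + 1), Xs (n + m)))
            Filter.atTop := h3a _ hanti
      _ ≤ lam + 2⁻¹ ^ n * 2 := by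
          refine Filter.liminf_le_of_frequently_le ?_
          exact Filter.Frequently.of_forall fun N =>
            (key n N).trans (add_le_add_right (sumbd n N) _)
  have hWmono : Monotone W := by
    intro n m hnm x hx
    simp only [hW, Set.mem_iInter] at hx ⊢
    intro k
    have : m + k = n + ((m - n) + k) := by omega
    rw [this]; exact hx _
  have hlim : b (⋃ n, W n) ≤ lam := by
    have := h3m W hWmono
    refine this.trans ?_
    have ht : Filter.Tendsto (fun n => lam + (2⁻¹ : ℝ≥0∞) ^ n * 2) Filter.atTop
        (𝓝 (lam + 0 * 2)) := by
      refine Filter.Tendsto.const_add _ (ENNReal.Tendsto.mul_const ?_ (Or.inr (by norm_num)))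
      exact ENNReal.tendsto_pow_atTop_nhds_zero_of_lt_one (by norm_num)
    have hle : Filter.liminf (fun n => b (W n)) Filter.atTop ≤
        Filter.liminf (fun n => lam + (2⁻¹ : ℝ≥0∞) ^ n * 2) Filter.atTop :=
      Filter.liminf_le_liminf (Filter.Eventually.of_forall hWbound)
    rw [ht.liminf_eq] at hle
    simpa using hle
  refine ⟨⋃ n, W n, isOptCut_of_le b ?_ ?_ hlim⟩
  · exact Set.mem_iUnion.mpr ⟨0, Set.mem_iInter.mpr fun k => (hcut (0 + k)).1⟩
  · intro h
    obtain ⟨n, hn⟩ := Set.mem_iUnion.mp h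
    exact (hcut (n + 0)).2 (Set.mem_iInter.mp hn 0)


theorem exists_laminar_system' {V : Type*} [Countable V] [Nonempty V]
    (b : Set V → ℝ≥0∞)
    (h0 : ∀ X : Set V, b X = 0 ↔ X = ∅ ∨ X = Set.univ)
    (h1 : ∀ X : Set V, b Xᶜ = b X)
    (h2 : ∀ X Y : Set V, b (X ∩ Y) + b (X ∪ Y) ≤ b X + b Y)
    (h3m : ∀ X : ℕ → Set V, Monotone X →
      b (⋃ n, X n) ≤ Filter.liminf (fun n => b (X n)) Filter.atTop)
    (h3a : ∀ X : ℕ → Set V, Antitone X →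
      b (⋂ n, X n) ≤ Filter.liminf (fun n => b (X n)) Filter.atTop)
    (h4 : ∀ u v : V, u ≠ v → lamB b u v < ⊤)
    :
    ∃ L : Set (Set V), (∀ A ∈ L, ∀ B ∈ L, LamPair A B) ∧
      (∀ Z ∈ L, ∃ x y : V, x ≠ y ∧ IsOptCut b x y Z) ∧
      (∀ u v : V, u ≠ v → ∃ Z ∈ L, IsOptCut b u v Z ∨ IsOptCut b u v Zᶜ) := by
  classical
  have hexists : ∀ u v : V, u ≠ v → ∃ X, IsOptCut b u v X := fun u v huv =>
    exists_isOptCut b h2 h3m h3a (h4 u v huv).ne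
  obtain ⟨p⟩ := (inferInstance : Nonempty V)
  by_cases htriv : ∀ u v : V, u = v
  · refine ⟨∅, ?_, ?_, fun u v huv => absurd (htriv u v) huv⟩
    · intro A hA; simp at hA
    · intro Z hZ; simp at hZ
  push_neg at htriv
  obtain ⟨u0, v0, huv0⟩ := htriv
  have hPne : Nonempty {q : V × V // q.1 ≠ q.2} := ⟨⟨(u0, v0), huv0⟩⟩
  obtain ⟨f, hf⟩ := exists_surjective_nat {q : V × V // q.1 ≠ q.2}
  set Inv : ℕ → Set (Set V) → Prop := fun n s =>
    s.Finite ∧ (∀ A ∈ s, ∀ B ∈ s, LamPair A B) ∧ (∀ W ∈ s, p ∉ W) ∧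
    (∀ W ∈ s, ∃ x y : V, x ≠ y ∧ IsOptCut b x y W) ∧
    (∀ m, m < n → ∃ Z ∈ s, IsOptCut b (f m).1.1 (f m).1.2 Z ∨
      IsOptCut b (f m).1.1 (f m).1.2 Zᶜ) with hInv
  have inv0 : Inv 0 ∅ := by
    refine ⟨Set.finite_empty, ?_, ?_, ?_, fun m hm => absurd hm (Nat.not_lt_zero m)⟩
    · intro A hA; simp at hA
    · intro W hW; simp at hW
    · intro W hW; simp at hW
  have step : ∀ n (s : Set (Set V)), Inv n s → ∃ s', s ⊆ s' ∧ Inv (n + 1) s' := by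
    intro n s hs
    obtain ⟨hsfin, hslam, hsp, hsopt, hssep⟩ := hs
    obtain ⟨Z, hpZ, hZopt, hZlam⟩ :=
      extend_lemma b h1 h2 h4 hexists p s hsfin hslam hsp hsopt (f n).2
    refine ⟨insert Z s, Set.subset_insert _ _, (hsfin.insert Z), ?_, ?_, ?_, ?_⟩
    · intro A hA B hB
      rcases Set.mem_insert_iff.mp hA with hA' | hA'
      · rcases Set.mem_insert_iff.mp hB with hB' | hB'
        · subst hA'; subst hB'; exact Or.inr (Or.inl subset_rfl)
        · subst hA'; exact hZlam B hB'
      · rcases Set.mem_insert_iff.mp hB with hB' | hB'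
        · subst hB'; exact lamPair_symm (hZlam A hA')
        · exact hslam A hA' B hB' 
    · intro W hW
      rcases Set.mem_insert_iff.mp hW with rfl | hW
      · exact hpZ
      · exact hsp W hW
    · intro W hW
      rcases Set.mem_insert_iff.mp hW with rfl | hW
      · rcases hZopt with h | h
        · exact ⟨(f n).1.1, (f n).1.2, (f n).2, h⟩
        · exact ⟨(f n).1.2, (f n).1.1, (f n).2.symm, h⟩
      · exact hsopt W hW
    · intro m hm
      rcases Nat.lt_succ_iff_lt_or_eq.mp hm with hm | rfl
      · obtain ⟨Z', hZ's, hZ'⟩ := hssep m hm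
        exact ⟨Z', Set.mem_insert_of_mem _ hZ's, hZ'⟩
      · refine ⟨Z, Set.mem_insert _ _, ?_⟩
        rcases hZopt with h | h
        · exact Or.inl h
        · exact Or.inr (isOptCut_compl' b h1 h)
  choose step' hstep1 hstep2 using step
  let g : ∀ n : ℕ, {s : Set (Set V) // Inv n s} :=
    fun n => Nat.rec ⟨∅, inv0⟩ (fun n ih => ⟨step' n ih.1 ih.2, hstep2 n ih.1 ih.2⟩) n
  have hgsucc : ∀ n, (g n).1 ⊆ (g (n + 1)).1 := fun n => hstep1 n (g n).1 (g n).2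
  have hgmono : ∀ m n, m ≤ n → (g m).1 ⊆ (g n).1 := by
    intro m n hmn
    induction n with
    | zero => rw [Nat.le_zero.mp hmn]
    | succ n ih =>
        rcases Nat.le_succ_iff_eq_or_le.mp hmn with rfl | hmn'
        · exact subset_rfl
        · exact (ih hmn').trans (hgsucc n)
  refine ⟨⋃ n, (g n).1, ?_, ?_, ?_⟩
  · intro A hA B hB
    obtain ⟨nA, hnA⟩ := Set.mem_iUnion.mp hA
    obtain ⟨nB, hnB⟩ := Set.mem_iUnion.mp hB
    exact (g (max nA nB)).2.2.1 A (hgmono nA _ (le_max_left _ _) hnA)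
      B (hgmono nB _ (le_max_right _ _) hnB)
  · intro Z hZ
    obtain ⟨n, hn⟩ := Set.mem_iUnion.mp hZ
    exact (g n).2.2.2.2.1 Z hn
  · intro u v huv
    obtain ⟨m, hm⟩ := hf ⟨(u, v), huv⟩
    obtain ⟨Z, hZs, hZ⟩ := (g (m + 1)).2.2.2.2.2 m (Nat.lt_succ_self m)
    rw [hm] at hZ
    exact ⟨Z, Set.mem_iUnion.mpr ⟨m + 1, hZs⟩, hZ⟩

end AuxLaminar

/-- Under conditions (0), (1), (2), (3') and (4) there is a laminar system of optimal cuts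
separating every pair of distinct vertices optimally. -/
theorem exists_laminar_system {V : Type*} [Countable V] [Nonempty V]
    (b : Set V → ℝ≥0∞)
    (h0 : ∀ X : Set V, b X = 0 ↔ X = ∅ ∨ X = Set.univ)
    (h1 : ∀ X : Set V, b Xᶜ = b X)
    (h2 : ∀ X Y : Set V, b (X ∩ Y) + b (X ∪ Y) ≤ b X + b Y)
    (h3m : ∀ X : ℕ → Set V, Monotone X →
      b (⋃ n, X n) ≤ Filter.liminf (fun n => b (X n)) Filter.atTop)
    (h3a : ∀ X : ℕ → Set V, Antitone X →
      b (⋂ n, X n) ≤ Filter.liminf (fun n => b (X n)) Filter.atTop)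
    (h4 : ∀ u v : V, u ≠ v → lamB b u v < ⊤)
    :
    ∃ L : Set (Set V), Laminar L ∧
      (∀ Z ∈ L, ∃ x y : V, x ≠ y ∧ IsOptCut b x y Z) ∧
      (∀ u v : V, u ≠ v → ∃ Z ∈ L, SepOptimally b u v Z) := by
  obtain ⟨L, hlamin, hopt, hsep⟩ := exists_laminar_system' b h0 h1 h2 h3m h3a h4
  refine ⟨L, ?_, hopt, ?_⟩
  · intro A hA B hB
    exact hlamin A hA B hB
  · intro u v huv
    obtain ⟨Z, hZL, hZ⟩ := hsep u v huv
    exact ⟨Z, hZL, hZ⟩
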